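/- Let $\lambda \in \mathbb{C}$, let $a_n = \binom{\lambda}{n}$ (the generalized binomial coefficient), and let $d_n^{(k)} = \det(a_{i+j+k-2})_{1 \le i,j \le n}$. Then $d_n^{(k)} = (-1)^{nk} \prod_{1 \le i \le j \le n-1} \frac{(i-\lambda-1)(i+\lambda)}{(i+j-1)(i+j)} \times \prod_{j=0}^{k-1}\prod_{i=1}^{n} \frac{i+j-\lambda-1}{i+j+n-1}$. -/

import Mathlib

open Finset

/-- Generalized binomial coefficient `λ choose n` for complex `λ`. -/
noncomputable def cchoose (lam : ℂ) (n : ℕ) : ℂ :=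
  (∏ s ∈ Finset.range n, (lam - s)) / (n.factorial : ℂ)

noncomputable def po (a : ℂ) (m : ℕ) : ℂ := ∏ s ∈ Finset.range m, (a + s)

@[simp] lemma po_zero (a : ℂ) : po a 0 = 1 := by simp [po]

lemma po_succ (a : ℂ) (m : ℕ) : po a (m+1) = po a m * (a + m) := by
  simp [po, prod_range_succ]

lemma po_succ' (a : ℂ) (m : ℕ) : po a (m+1) = a * po (a+1) m := by
  have h : ∏ s ∈ range m, (a + ((s+1 : ℕ) : ℂ)) = po (a+1) m :=
    prod_congr rfl fun s _ => by push_cast; ring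
  rw [po, prod_range_succ', h]
  push_cast
  ring

lemma po_ne_zero {a : ℂ} (m : ℕ) (h : ∀ s : ℕ, a + s ≠ 0) : po a m ≠ 0 :=
  prod_ne_zero_iff.mpr fun s _ => h s

lemma po_nat_ne_zero (c : ℕ) (hc : c ≠ 0) : ∀ s : ℕ, (c : ℂ) + s ≠ 0 := by
  intro s
  have : (c : ℂ) + s = ((c + s : ℕ) : ℂ) := by push_cast; ring
  rw [this, Ne, Nat.cast_eq_zero]
  omega

lemma natc_ne_zero (c : ℕ) (hc : c ≠ 0) : (c : ℂ) ≠ 0 := Nat.cast_ne_zero.mpr hc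

@[simp] lemma cchoose_zero (lam : ℂ) : cchoose lam 0 = 1 := by simp [cchoose]

lemma fact_ne (k : ℕ) : ((k.factorial : ℕ) : ℂ) ≠ 0 :=
  Nat.cast_ne_zero.mpr (Nat.factorial_ne_zero k)

lemma cchoose_mul (lam : ℂ) (m : ℕ) :
    ((m:ℂ)+1) * cchoose lam (m+1) = (lam - m) * cchoose lam m := by
  unfold cchoose
  rw [prod_range_succ, Nat.factorial_succ]
  have h1 := fact_ne m
  have h2 : (1:ℂ) + m ≠ 0 := by
    have := po_nat_ne_zero 1 (by omega) m; simpa using this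
  push_cast
  field_simp

lemma cchoose_shift (lam : ℂ) (m : ℕ) :
    ((m:ℂ)+1) * cchoose (lam+1) (m+1) = (lam+1) * cchoose lam m := by
  unfold cchoose
  rw [prod_range_succ', Nat.factorial_succ]
  have h1 := fact_ne m
  have h2' : (1:ℂ) + m ≠ 0 := by
    have := po_nat_ne_zero 1 (by omega) m; simpa using this
  have h2 : ∏ s ∈ range m, (lam + 1 - ((s+1 : ℕ) : ℂ)) = ∏ s ∈ range m, (lam - s) :=
    prod_congr rfl fun s _ => by push_cast; ring
  rw [h2]
  push_cast
  field_simp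
  simp

lemma entry_id (lam : ℂ) (i j k : ℕ) :
    ((i:ℂ)+1+k) * cchoose lam (i+1+j+k) - (lam - ((i:ℂ)+1) - k + 1) * cchoose lam (i+j+k)
      = -(j:ℂ) * cchoose (lam+1) (i+1+j+k) := by
  have h1 := cchoose_mul lam (i+j+k)
  have h2 := cchoose_shift lam (i+j+k)
  have hm : ((i+j+k : ℕ) : ℂ) + 1 ≠ 0 := by
    have := po_nat_ne_zero (i+j+k+1) (by omega) 0
    push_cast at this ⊢
    simpa using this
  have hidx : i+1+j+k = (i+j+k)+1 := by omega
  rw [hidx]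
  apply mul_left_cancel₀ hm
  push_cast at h1 h2 ⊢
  linear_combination ((i:ℂ)+1+k) * h1 + (j:ℂ) * h2

noncomputable def MM (n k : ℕ) (lam : ℂ) : Matrix (Fin n) (Fin n) ℂ :=
  Matrix.of fun i j => cchoose lam ((i : ℕ) + (j : ℕ) + k)

noncomputable def LL (m k : ℕ) (lam : ℂ) : Matrix (Fin (m+1)) (Fin (m+1)) ℂ :=
  Matrix.of fun i t =>
    (if t = i then (if (i:ℕ) = 0 then 1 else ((i:ℕ):ℂ) + k) else 0) +
    (if (t:ℕ) + 1 = (i:ℕ) then -(lam - ((i:ℕ):ℂ) - k + 1) else 0)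

lemma LL_tri (m k : ℕ) (lam : ℂ) : (LL m k lam).BlockTriangular OrderDual.toDual := by
  intro i t h
  have hlt : (i:ℕ) < (t:ℕ) := h
  simp only [LL, Matrix.of_apply]
  rw [if_neg (by omega : ¬ (t:ℕ) + 1 = (i:ℕ)), if_neg (fun he => by simp [he] at hlt)]
  simp

lemma LL_det (m k : ℕ) (lam : ℂ) :
    (LL m k lam).det = ∏ i : Fin m, (((i:ℕ):ℂ) + 1 + k) := by
  rw [Matrix.det_of_lowerTriangular _ (LL_tri m k lam)]
  have h : ∀ i : Fin (m+1), (LL m k lam) i i =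
      (if (i:ℕ) = 0 then 1 else ((i:ℕ):ℂ) + k) := by
    intro i
    simp only [LL, Matrix.of_apply, if_pos rfl]
    rw [if_neg (by omega : ¬ (i:ℕ) + 1 = (i:ℕ))]
    simp
  simp only [h]
  rw [Fin.prod_univ_succ]
  simp only [Fin.val_zero, if_true, one_mul, Fin.val_succ, Nat.succ_ne_zero, if_false, reduceIte]
  exact prod_congr rfl fun i _ => by push_cast; ring

lemma LL_mul (m k : ℕ) (lam : ℂ) :
    LL m k lam * MM (m+1) k lam = Matrix.of fun i j : Fin (m+1) =>
      if (i:ℕ) = 0 then cchoose lam ((j:ℕ)+k)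
      else -(((j:ℕ):ℂ)) * cchoose (lam+1) ((i:ℕ)+(j:ℕ)+k) := by
  ext i j
  rw [Matrix.mul_apply]
  simp only [LL, MM, Matrix.of_apply, add_mul, ite_mul, zero_mul, sum_add_distrib]
  rw [Finset.sum_ite_eq' univ i]
  simp only [mem_univ, if_true]
  rcases Fin.eq_zero_or_eq_succ i with rfl | ⟨i', rfl⟩
  · simp only [Fin.val_zero, if_pos rfl]
    rw [Finset.sum_eq_zero (fun t _ => by simp)]
    simp
  · have hcond : ∀ t : Fin (m+1),
        ((t:ℕ)+1 = ((i'.succ : Fin (m+1)):ℕ)) = (t = i'.castSucc) := by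
      intro t
      simp only [Fin.val_succ, eq_iff_iff, Fin.ext_iff, Fin.coe_castSucc]
      omega
    simp only [hcond]
    rw [Finset.sum_ite_eq' univ i'.castSucc]
    simp only [mem_univ, if_true, Fin.val_succ, Nat.succ_ne_zero, if_false,
      Fin.coe_castSucc]
    have h := entry_id lam (i':ℕ) (j:ℕ) k
    push_cast at h ⊢
    linear_combination h

lemma det_rec (m k : ℕ) (lam : ℂ) :
    (∏ i : Fin m, (((i:ℕ):ℂ) + 1 + k)) * (MM (m+1) k lam).det =
      cchoose lam k * ((∏ j : Fin m, (-(((j:ℕ):ℂ) + 1))) * (MM m (k+2) (lam+1)).det) := by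
  have h := Matrix.det_mul (LL m k lam) (MM (m+1) k lam)
  rw [LL_mul, LL_det] at h
  rw [← h]
  rw [Matrix.det_succ_column_zero, Fin.sum_univ_succ]
  simp only [Matrix.of_apply, Fin.val_succ, Fin.val_zero, Nat.succ_ne_zero, if_false,
    Nat.cast_zero, neg_zero, zero_mul, mul_zero, sum_const_zero, add_zero, pow_zero, one_mul,
    Nat.zero_add, reduceIte]
  have hsub : ((Matrix.of fun i j : Fin (m+1) =>
      if (i:ℕ) = 0 then cchoose lam ((j:ℕ)+k)
      else -(((j:ℕ):ℂ)) * cchoose (lam+1) ((i:ℕ)+(j:ℕ)+k)).submatrix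
        (0 : Fin (m+1)).succAbove Fin.succ) =
      Matrix.of fun i j : Fin m => (-(((j:ℕ):ℂ)+1)) * (MM m (k+2) (lam+1)) i j := by
    ext i j
    simp only [Matrix.submatrix_apply, Fin.zero_succAbove, Matrix.of_apply, Fin.val_succ,
      Nat.succ_ne_zero, if_false, MM]
    rw [show (i:ℕ)+1+((j:ℕ)+1)+k = (i:ℕ)+(j:ℕ)+(k+2) by omega]
    push_cast
    ring
  rw [hsub, Matrix.det_mul_row]

lemma prod_Icc_one (f : ℕ → ℂ) (m : ℕ) : ∏ i ∈ Icc 1 m, f i = ∏ s ∈ range m, f (s+1) := by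
  induction m with
  | zero => simp
  | succ m ih =>
    rw [← Finset.insert_Icc_right_eq_Icc_add_one (by omega : 1 ≤ m+1),
      prod_insert (by simp), ih, prod_range_succ]
    ring

noncomputable def gp (lam : ℂ) (j : ℕ) : ℂ :=
  po (-lam) j * po (lam+1) j / (po (j:ℂ) j * po ((j:ℂ)+1) j)

lemma inner1 (lam : ℂ) (j : ℕ) :
    (∏ i ∈ Icc 1 j, (((i:ℂ) - lam - 1) * ((i:ℂ) + lam)) / (((i:ℂ) + j - 1) * ((i:ℂ) + j)))
      = gp lam j := by
  rw [prod_Icc_one]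
  unfold gp po
  rw [← prod_mul_distrib, ← prod_mul_distrib, ← prod_div_distrib]
  exact prod_congr rfl fun s _ => by push_cast; ring

lemma inner2 (lam : ℂ) (j n : ℕ) :
    (∏ i ∈ Icc 1 n, ((i:ℂ) + j - lam - 1) / ((i:ℂ) + j + n - 1))
      = po ((j:ℂ) - lam) n / po ((j:ℂ) + n) n := by
  rw [prod_Icc_one]
  unfold po
  rw [← prod_div_distrib]
  exact prod_congr rfl fun s _ => by push_cast; ring

noncomputable def Fp (n k : ℕ) (lam : ℂ) : ℂ :=
  (-1)^(n*k) * (∏ j ∈ range (n-1), gp lam (j+1)) *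
    ∏ j ∈ range k, po ((j:ℂ) - lam) n / po ((j:ℂ) + n) n

lemma Fp_succ_k (n k : ℕ) (lam : ℂ) :
    Fp n (k+1) lam = Fp n k lam * ((-1)^n * (po ((k:ℂ) - lam) n / po ((k:ℂ) + n) n)) := by
  unfold Fp
  rw [prod_range_succ, mul_add, pow_add]
  ring

lemma po_one (a : ℂ) : po a 1 = a := by
  rw [show (1:ℕ) = 0+1 from rfl, po_succ, po_zero]
  push_cast; ring

lemma keyS (m : ℕ) (lam : ℂ) :
    (po (-lam-1) (m+1) * po (-lam) (m+1) / (po ((m:ℂ)+1) (m+1) * po ((m:ℂ)+2) (m+1))) *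
        gp lam (m+2)
      = (-1) * gp (lam+1) (m+1) *
        (po (-lam-1) (m+2) * po (-lam) (m+2) /
          (po ((m:ℂ)+2) (m+2) * po ((m:ℂ)+3) (m+2))) := by
  have hD1 : po ((m:ℂ)+1) (m+1) ≠ 0 := po_ne_zero _ (fun s => by
    have := po_nat_ne_zero (m+1) (by omega) s; push_cast at this; exact this)
  have hD2 : po ((m:ℂ)+2) (m+1) ≠ 0 := po_ne_zero _ (fun s => by
    have := po_nat_ne_zero (m+2) (by omega) s; push_cast at this; exact this)
  have hD3 : po ((m:ℂ)+2) (m+2) ≠ 0 := po_ne_zero _ (fun s => by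
    have := po_nat_ne_zero (m+2) (by omega) s; push_cast at this; exact this)
  have hD4 : po ((m:ℂ)+3) (m+2) ≠ 0 := po_ne_zero _ (fun s => by
    have := po_nat_ne_zero (m+3) (by omega) s; push_cast at this; exact this)
  have h1 : po (-lam) (m+2) = po (-lam) (m+1) * (-lam + ((m:ℂ)+1)) := by
    have := po_succ (-lam) (m+1); push_cast at this; exact this
  have h2 : po (lam+1) (m+2) = (lam+1) * po (lam+2) (m+1) := by
    have := po_succ' (lam+1) (m+1)
    rw [show lam+1+1 = lam+2 by ring] at this
    exact this
  have h3 : po (-lam-1) (m+2) = (-lam-1) * po (-lam) (m+1) := by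
    have := po_succ' (-lam-1) (m+1)
    rw [show -lam-1+1 = -lam by ring] at this
    exact this
  unfold gp
  push_cast
  rw [show -(lam+1) = -lam-1 by ring, show lam+1+1 = lam+2 by ring,
    show (m:ℂ)+2+1 = (m:ℂ)+3 by ring]
  rw [h1, h2, h3]
  ring


lemma baseP (m : ℕ) (lam : ℂ) :
    ∏ j ∈ range (m+1), gp lam (j+1) =
      (-1)^(m+1) * (∏ j ∈ range m, gp (lam+1) (j+1)) *
        (po (-lam-1) (m+1) * po (-lam) (m+1) /
          (po ((m:ℂ)+1) (m+1) * po ((m:ℂ)+2) (m+1))) := by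
  induction m with
  | zero =>
    simp only [range_one, range_zero, prod_singleton, prod_empty, zero_add, pow_one,
      Nat.cast_zero, zero_add, mul_one, one_mul]
    simp only [gp, po_one]
    push_cast
    ring
  | succ m ih =>
    rw [prod_range_succ, ih, prod_range_succ]
    push_cast
    rw [show m+1+1 = m+2 from rfl, show ((m:ℂ)+1+1) = (m:ℂ)+2 by ring,
      show ((m:ℂ)+1+2) = (m:ℂ)+3 by ring]
    linear_combination ((-1:ℂ)^(m+1) * (∏ j ∈ Finset.range m, gp (lam+1) (j+1))) * keyS m lam

lemma EE (m k : ℕ) (lam : ℂ) :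
    Fp (m+1) k lam * po ((k:ℂ)+1) m =
      cchoose lam k * ((-1:ℂ)^m * po 1 m) * Fp m (k+2) (lam+1) := by
  induction k with
  | zero =>
    rw [cchoose_zero]
    rcases m with _ | m'
    · simp [Fp, po_zero]
    · have hb := baseP m' lam
      unfold Fp
      simp only [Nat.cast_zero, zero_add, Nat.add_sub_cancel, mul_zero, pow_zero,
        range_zero, prod_empty, mul_one, one_mul]
      rw [hb]
      rw [show (m'+1)*2 = 2*(m'+1) by ring, pow_mul]
      norm_num
      simp only [prod_range_succ, range_zero, prod_empty, one_mul]
      push_cast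
      rw [show (0:ℂ) - (lam+1) = -lam-1 by ring, show (1:ℂ) - (lam+1) = -lam by ring,
        show (0:ℂ) + (↑m'+1) = ↑m'+1 by ring, show (1:ℂ) + (↑m'+1) = ↑m'+2 by ring]
      ring
  | succ k ih =>
    have hpo1 : po ((k:ℂ)+1) m ≠ 0 := po_ne_zero _ (fun s => by
      have := po_nat_ne_zero (k+1) (by omega) s; push_cast at this; exact this)
    have hk1 : ((k:ℂ)+1) ≠ 0 := by
      have := po_nat_ne_zero (k+1) (by omega) 0; push_cast at this; simpa using this
    have ih' : Fp (m+1) k lam =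
        cchoose lam k * ((-1:ℂ)^m * po 1 m) * Fp m (k+2) (lam+1) / po ((k:ℂ)+1) m :=
      (eq_div_iff hpo1).mpr ih
    have hcc : cchoose lam (k+1) = (lam - k) * cchoose lam k / ((k:ℂ)+1) :=
      (eq_div_iff hk1).mpr (by linear_combination cchoose_mul lam k)
    rw [Fp_succ_k (m+1) k lam, Fp_succ_k m (k+2) (lam+1), ih', hcc]
    push_cast
    rw [show ((k:ℂ)+2) - (lam+1) = (k:ℂ)+1-lam by ring,
      show ((k:ℂ)+1+1) = (k:ℂ)+2 by ring]
    -- expansions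
    have e1 : po ((k:ℂ)-lam) (m+1) = ((k:ℂ)-lam) * po ((k:ℂ)+1-lam) m := by
      have := po_succ' ((k:ℂ)-lam) m
      rw [show (k:ℂ)-lam+1 = (k:ℂ)+1-lam by ring] at this
      exact this
    have e2 : po ((k:ℂ)+(↑m+1)) (m+1) = ((k:ℂ)+↑m+1) * po ((k:ℂ)+2+↑m) m := by
      have := po_succ' ((k:ℂ)+(↑m+1)) m
      rw [show (k:ℂ)+(↑m+1)+1 = (k:ℂ)+↑m+2 by ring] at this
      rw [this, show (k:ℂ)+(↑m+1) = (k:ℂ)+↑m+1 by ring, show (k:ℂ)+↑m+2 = (k:ℂ)+2+↑m by ring]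
    have e3 : ((k:ℂ)+1) * po ((k:ℂ)+2) m = po ((k:ℂ)+1) m * ((k:ℂ)+1+↑m) := by
      have ha := po_succ' ((k:ℂ)+1) m
      have hb := po_succ ((k:ℂ)+1) m
      rw [show (k:ℂ)+1+1 = (k:ℂ)+2 by ring] at ha
      rw [← ha, hb]
    have hpoD : po ((k:ℂ)+2+↑m) m ≠ 0 := po_ne_zero _ (fun s => by
      have := po_nat_ne_zero (k+2+m) (by omega) s; push_cast at this
      convert this using 2 <;> push_cast <;> ring)
    have hkm : ((k:ℂ)+↑m+1) ≠ 0 := by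
      have := po_nat_ne_zero (k+m+1) (by omega) 0; push_cast at this; simpa using this
    rw [e1, e2]
    field_simp
    linear_combination (((-1:ℂ))^(m+1) * ((k:ℂ)-lam) * po ((k:ℂ)+1-lam) m *
      cchoose lam k * po 1 m * Fp m (k+2) (lam+1)) * e3


lemma finprod1 (m k : ℕ) : (∏ i : Fin m, (((i:ℕ):ℂ) + 1 + k)) = po ((k:ℂ)+1) m := by
  rw [Fin.prod_univ_eq_prod_range (fun s : ℕ => ((s:ℂ) + 1 + k)) m]
  exact prod_congr rfl fun s _ => by push_cast; ring

lemma finprod2 (m : ℕ) : (∏ j : Fin m, (-(((j:ℕ):ℂ) + 1))) = (-1:ℂ)^m * po 1 m := by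
  rw [Fin.prod_univ_eq_prod_range (fun s : ℕ => -((s:ℂ) + 1)) m]
  have h : ∀ s ∈ range m, -((s:ℂ)+1) = (-1) * ((1:ℂ)+s) := fun s _ => by ring
  rw [prod_congr rfl h, prod_mul_distrib, prod_const, card_range, po]

lemma det_eq_Fp : ∀ (n k : ℕ) (lam : ℂ), (MM n k lam).det = Fp n k lam := by
  intro n
  induction n with
  | zero =>
    intro k lam
    rw [Matrix.det_isEmpty]
    simp [Fp, po_zero]
  | succ m ih =>
    intro k lam
    have hrec := det_rec m k lam
    rw [finprod1, finprod2, ih (k+2) (lam+1)] at hrec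
    have hE := EE m k lam
    have hpo : po ((k:ℂ)+1) m ≠ 0 := po_ne_zero _ (fun s => by
      have := po_nat_ne_zero (k+1) (by omega) s; push_cast at this; exact this)
    apply mul_left_cancel₀ hpo
    linear_combination hrec - hE

theorem stmt15 (lam : ℂ) (n k : ℕ) :
    (Matrix.of fun i j : Fin n => cchoose lam ((i : ℕ) + (j : ℕ) + k)).det =
      (-1) ^ (n * k) *
        (∏ j ∈ Finset.Icc 1 (n - 1), ∏ i ∈ Finset.Icc 1 j,
          (((i : ℂ) - lam - 1) * ((i : ℂ) + lam)) / (((i : ℂ) + j - 1) * ((i : ℂ) + j))) *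
        ∏ j ∈ Finset.range k, ∏ i ∈ Finset.Icc 1 n,
          ((i : ℂ) + j - lam - 1) / ((i : ℂ) + j + n - 1) := by
  calc (Matrix.of fun i j : Fin n => cchoose lam ((i : ℕ) + (j : ℕ) + k)).det
      = Fp n k lam := det_eq_Fp n k lam
    _ = _ := by
      unfold Fp
      rw [← prod_Icc_one (fun j => gp lam j) (n-1)]
      congr 1
      · congr 1
        exact prod_congr rfl fun j _ => (inner1 lam j).symm
      · exact prod_congr rfl fun j _ => (inner2 lam j n).symm
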